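/- Let Υ ∈ (0,∞) and let φ : ℝ → [0,∞) be even and continuous with φ(u) > 0 for |u| < Υ, φ(u) = 0 for |u| ≥ Υ, and ∫_{−Υ}^{Υ} φ(u)/(Υ − u) du < ∞; let κ₀ > 0 be the unique zero of Φ(κ) := 1 − (1/(2κ²)) ∫_{−Υ}^{Υ} φ(u)/((Υ − u)(Υ + κ − u)) du. For 0 < |k| ≤ κ₀ and τ ≥ 2|k|Υ + |k|², define F_k(τ) := 1 − (1/(2|k|²)) ∫_{−Υ}^{Υ} φ(u) / ( ((τ − |k|²)/(2|k|) − u)((τ + |k|²)/(2|k|) − u) ) du. Then F_k is real-valued, continuous and strictly increasing on [2|k|Υ + |k|², ∞), F_k(2|k|Υ + |k|²) = Φ(|k|) ≤ 0, and F_k(τ) → 1 as τ → ∞. Consequently there is a unique τ_*(k) ∈ [2|k|Υ + |k|², ∞) with F_k(τ_*(k)) = 0, it satisfies ∫_{−Υ}^{Υ} φ(u) / ( (τ_*(k)/2 − |k|u)² − |k|⁴/4 ) du = 2, and moreover τ_*(κ₀) = 2κ₀Υ + κ₀² and τ_*(k) → √(2 ∫_ℝ φ(u) du) as |k| → 0⁺.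 -/

import Mathlib

open MeasureTheory

/-- `Φ(κ) = 1 − (1/(2κ²)) ∫_{−Υ}^{Υ} φ(u)/((Υ−u)(Υ+κ−u)) du`. -/
noncomputable def PhiFun (φ : ℝ → ℝ) (Υ : ℝ) (κ : ℝ) : ℝ :=
  1 - (1 / (2 * κ ^ 2)) *
    ∫ u in Set.Ioo (-Υ) Υ, φ u / ((Υ - u) * (Υ + κ - u))

/-- The boundary dielectric function on the imaginary axis, as a function of
`r = |k|` and `τ`:
`F_k(τ) = 1 − (1/(2|k|²)) ∫_{−Υ}^{Υ} φ(u)/(((τ−|k|²)/(2|k|) − u)((τ+|k|²)/(2|k|) − u)) du`. -/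
noncomputable def Ffun (φ : ℝ → ℝ) (Υ : ℝ) (r τ : ℝ) : ℝ :=
  1 - (1 / (2 * r ^ 2)) *
    ∫ u in Set.Ioo (-Υ) Υ,
      φ u / (((τ - r ^ 2) / (2 * r) - u) * ((τ + r ^ 2) / (2 * r) - u))

section myaux
lemma aux_cont (φ : ℝ → ℝ) (Υ a b : ℝ) (hφ : Continuous φ)
    (ha : Υ ≤ a) (hab : a ≤ b) :
    ContinuousOn (fun u => φ u / ((a - u) * (b - u))) (Set.Ioo (-Υ) Υ) := by
  apply ContinuousOn.div hφ.continuousOn (by fun_prop)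
  intro u hu
  have h1 : 0 < a - u := by have := hu.2; simp only [Set.mem_Ioo] at hu; linarith [hu.2]
  have h2 : 0 < b - u := by linarith
  positivity

lemma aux_int (φ : ℝ → ℝ) (Υ a b c : ℝ) (hφ : Continuous φ) (hpos : ∀ u, 0 ≤ φ u)
    (hint : IntegrableOn (fun u : ℝ => φ u / (Υ - u)) (Set.Ioo (-Υ) Υ))
    (hc : 0 < c) (ha : Υ ≤ a) (hb : Υ + c ≤ b) (hab : a ≤ b) :
    IntegrableOn (fun u => φ u / ((a - u) * (b - u))) (Set.Ioo (-Υ) Υ) := by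
  have hbnd : Integrable (fun u : ℝ => (1/c) * (φ u / (Υ - u)))
      ((volume : Measure ℝ).restrict (Set.Ioo (-Υ) Υ)) := hint.const_mul _
  refine hbnd.mono' ((aux_cont φ Υ a b hφ ha hab).aestronglyMeasurable measurableSet_Ioo) ?_
  refine (ae_restrict_iff' measurableSet_Ioo).2 (Filter.Eventually.of_forall fun u hu => ?_)
  simp only [Set.mem_Ioo] at hu
  have h1 : 0 < Υ - u := by linarith [hu.2]
  have h2 : Υ - u ≤ a - u := by linarith
  have h3 : c ≤ b - u := by linarith [hu.2]
  have hden : (0:ℝ) < (a - u) * (b - u) := by nlinarith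
  rw [Real.norm_eq_abs, abs_of_nonneg (div_nonneg (hpos u) hden.le)]
  rw [one_div, inv_mul_eq_div, div_div]
  exact div_le_div_of_nonneg_left (hpos u) (mul_pos h1 hc) (by nlinarith)

lemma aux_le (φ : ℝ → ℝ) (Υ a₁ b₁ a₂ b₂ c : ℝ) (hφ : Continuous φ) (hpos : ∀ u, 0 ≤ φ u)
    (hint : IntegrableOn (fun u : ℝ => φ u / (Υ - u)) (Set.Ioo (-Υ) Υ))
    (hc : 0 < c) (ha1 : Υ ≤ a₁) (hb1 : Υ + c ≤ b₁) (hab1 : a₁ ≤ b₁)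
    (ha : a₁ ≤ a₂) (hb : b₁ ≤ b₂) (hab2 : a₂ ≤ b₂) :
    (∫ u in Set.Ioo (-Υ) Υ, φ u / ((a₂ - u) * (b₂ - u))) ≤
      ∫ u in Set.Ioo (-Υ) Υ, φ u / ((a₁ - u) * (b₁ - u)) := by
  refine setIntegral_mono_on
    (aux_int φ Υ a₂ b₂ c hφ hpos hint hc (le_trans ha1 ha) (le_trans hb1 hb) hab2)
    (aux_int φ Υ a₁ b₁ c hφ hpos hint hc ha1 hb1 hab1) measurableSet_Ioo ?_
  intro u hu
  simp only [Set.mem_Ioo] at hu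
  have h1 : 0 < a₁ - u := by linarith [hu.2]
  have h2 : 0 < b₁ - u := by linarith [hu.2]
  exact div_le_div_of_nonneg_left (hpos u) (mul_pos h1 h2) (by nlinarith)

lemma aux_pos (φ : ℝ → ℝ) (Υ a b c : ℝ) (hΥ : 0 < Υ) (hφ : Continuous φ)
    (hpos : ∀ u, 0 ≤ φ u) (hppos : ∀ u : ℝ, |u| < Υ → 0 < φ u)
    (hint : IntegrableOn (fun u : ℝ => φ u / (Υ - u)) (Set.Ioo (-Υ) Υ))
    (hc : 0 < c) (ha : Υ ≤ a) (hb : Υ + c ≤ b) (hab : a ≤ b) :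
    0 < ∫ u in Set.Ioo (-Υ) Υ, φ u / ((a - u) * (b - u)) := by
  rw [setIntegral_pos_iff_support_of_nonneg_ae ?_ (aux_int φ Υ a b c hφ hpos hint hc ha hb hab)]
  · refine lt_of_lt_of_le ?_ (measure_mono (?_ : Set.Ioo (-Υ) Υ ⊆ _))
    · simp [Real.volume_Ioo]; linarith
    · intro u hu
      simp only [Set.mem_Ioo] at hu
      have h1 : 0 < a - u := by linarith [hu.2]
      have h2 : 0 < b - u := by linarith [hu.2]
      have hφu : 0 < φ u := hppos u (abs_lt.2 ⟨hu.1, hu.2⟩)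
      refine ⟨?_, by simp [Set.mem_Ioo]; exact hu⟩
      simp only [Function.mem_support]
      exact ne_of_gt (div_pos hφu (mul_pos h1 h2))
  · refine (ae_restrict_iff' measurableSet_Ioo).2 (Filter.Eventually.of_forall fun u hu => ?_)
    simp only [Set.mem_Ioo] at hu
    have h1 : 0 < a - u := by linarith [hu.2]
    have h2 : 0 < b - u := by linarith [hu.2]
    simp only [Pi.zero_apply]
    exact div_nonneg (hpos u) (mul_pos h1 h2).le

lemma aux_lt (φ : ℝ → ℝ) (Υ a₁ b₁ a₂ b₂ c : ℝ) (hΥ : 0 < Υ) (hφ : Continuous φ)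
    (hpos : ∀ u, 0 ≤ φ u) (hppos : ∀ u : ℝ, |u| < Υ → 0 < φ u)
    (hint : IntegrableOn (fun u : ℝ => φ u / (Υ - u)) (Set.Ioo (-Υ) Υ))
    (hc : 0 < c) (ha1 : Υ ≤ a₁) (hb1 : Υ + c ≤ b₁) (hab1 : a₁ ≤ b₁)
    (ha : a₁ < a₂) (hb : b₁ ≤ b₂) (hab2 : a₂ ≤ b₂) :
    (∫ u in Set.Ioo (-Υ) Υ, φ u / ((a₂ - u) * (b₂ - u))) <
      ∫ u in Set.Ioo (-Υ) Υ, φ u / ((a₁ - u) * (b₁ - u)) := by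
  have i1 := aux_int φ Υ a₁ b₁ c hφ hpos hint hc ha1 hb1 hab1
  have i2 := aux_int φ Υ a₂ b₂ c hφ hpos hint hc (le_trans ha1 ha.le) (le_trans hb1 hb) hab2
  have i12 : IntegrableOn (fun u => φ u / ((a₁ - u) * (b₁ - u)) - φ u / ((a₂ - u) * (b₂ - u)))
      (Set.Ioo (-Υ) Υ) := i1.sub i2
  have key : 0 < ∫ u in Set.Ioo (-Υ) Υ,
      (φ u / ((a₁ - u) * (b₁ - u)) - φ u / ((a₂ - u) * (b₂ - u))) := by
    rw [setIntegral_pos_iff_support_of_nonneg_ae ?_ i12]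
    · refine lt_of_lt_of_le ?_ (measure_mono (?_ : Set.Ioo (-Υ) Υ ⊆ _))
      · simp [Real.volume_Ioo]; linarith
      · intro u hu
        simp only [Set.mem_Ioo] at hu
        have h1 : 0 < a₁ - u := by linarith [hu.2]
        have h2 : 0 < b₁ - u := by linarith [hu.2]
        have hφu : 0 < φ u := hppos u (abs_lt.2 ⟨hu.1, hu.2⟩)
        have hlt : φ u / ((a₂ - u) * (b₂ - u)) < φ u / ((a₁ - u) * (b₁ - u)) :=
          div_lt_div_of_pos_left hφu (mul_pos h1 h2) (by nlinarith)
        refine ⟨?_, by simp [Set.mem_Ioo]; exact hu⟩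
        simp only [Function.mem_support]
        intro hcon
        nlinarith [sub_eq_zero.mp hcon]
    · refine (ae_restrict_iff' measurableSet_Ioo).2 (Filter.Eventually.of_forall fun u hu => ?_)
      simp only [Set.mem_Ioo] at hu
      have h1 : 0 < a₁ - u := by linarith [hu.2]
      have h2 : 0 < b₁ - u := by linarith [hu.2]
      have hle : φ u / ((a₂ - u) * (b₂ - u)) ≤ φ u / ((a₁ - u) * (b₁ - u)) :=
        div_le_div_of_nonneg_left (hpos u) (mul_pos h1 h2) (by nlinarith)
      simp [Pi.zero_apply]; linarith
  rw [integral_sub i1 i2] at key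
  linarith

section
variable (φ : ℝ → ℝ) (Υ : ℝ)

lemma aux_integrable_phi (hΥ : 0 < Υ) (hφ : Continuous φ)
    (hsupp : ∀ u : ℝ, Υ ≤ |u| → φ u = 0) : Integrable φ := by
  refine hφ.integrable_of_hasCompactSupport (HasCompactSupport.intro (isCompact_Icc (a := -Υ) (b := Υ)) ?_)
  intro x hx
  simp only [Set.mem_Icc, not_and_or, not_le] at hx
  refine hsupp x ?_
  rcases hx with h | h
  · exact le_abs.2 (Or.inr (by linarith))
  · exact le_abs.2 (Or.inl h.le)

lemma aux_rho_eq (hΥ : 0 < Υ) (hsupp : ∀ u : ℝ, Υ ≤ |u| → φ u = 0) :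
    (∫ u in Set.Ioo (-Υ) Υ, φ u) = ∫ u : ℝ, φ u := by
  refine setIntegral_eq_integral_of_forall_compl_eq_zero ?_
  intro x hx
  simp only [Set.mem_Ioo, not_and_or, not_lt] at hx
  refine hsupp x ?_
  rcases hx with h | h
  · exact le_abs.2 (Or.inr (by linarith))
  · exact le_abs.2 (Or.inl h)

lemma aux_rho_pos (hΥ : 0 < Υ) (hφ : Continuous φ) (hpos : ∀ u, 0 ≤ φ u)
    (hppos : ∀ u : ℝ, |u| < Υ → 0 < φ u) (hsupp : ∀ u : ℝ, Υ ≤ |u| → φ u = 0) :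
    0 < ∫ u in Set.Ioo (-Υ) Υ, φ u := by
  rw [setIntegral_pos_iff_support_of_nonneg_ae
    (Filter.Eventually.of_forall fun u => hpos u)
    ((aux_integrable_phi φ Υ hΥ hφ hsupp).integrableOn)]
  refine lt_of_lt_of_le ?_ (measure_mono (?_ : Set.Ioo (-Υ) Υ ⊆ _))
  · simp [Real.volume_Ioo]; linarith
  · intro u hu
    simp only [Set.mem_Ioo] at hu
    exact ⟨Function.mem_support.2 (ne_of_gt (hppos u (abs_lt.2 ⟨hu.1, hu.2⟩))),
      by simp [Set.mem_Ioo]; exact hu⟩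

end

section main
variable (φ : ℝ → ℝ) (Υ : ℝ)

lemma main_r (hΥ : 0 < Υ) (hφ : Continuous φ) (hpos : ∀ u, 0 ≤ φ u)
    (hppos : ∀ u : ℝ, |u| < Υ → 0 < φ u) (hsupp : ∀ u : ℝ, Υ ≤ |u| → φ u = 0)
    (hint : IntegrableOn (fun u : ℝ => φ u / (Υ - u)) (Set.Ioo (-Υ) Υ))
    (r : ℝ) (hr : 0 < r) :
    ContinuousOn (Ffun φ Υ r) (Set.Ici (2 * r * Υ + r ^ 2)) ∧
    StrictMonoOn (Ffun φ Υ r) (Set.Ici (2 * r * Υ + r ^ 2)) ∧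
    Ffun φ Υ r (2 * r * Υ + r ^ 2) = PhiFun φ Υ r ∧
    Filter.Tendsto (Ffun φ Υ r) Filter.atTop (nhds 1) := by
  have h2r : (0:ℝ) < 2 * r := by linarith
  set τ0 := 2 * r * Υ + r ^ 2 with hτ0
  -- basic facts about A τ := (τ - r²)/(2r), B τ := (τ + r²)/(2r)
  have hA : ∀ τ : ℝ, τ0 ≤ τ → Υ ≤ (τ - r ^ 2) / (2 * r) := by
    intro τ hτ; rw [le_div_iff₀ h2r]; nlinarith
  have hB : ∀ τ : ℝ, τ0 ≤ τ → Υ + r ≤ (τ + r ^ 2) / (2 * r) := by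
    intro τ hτ; rw [le_div_iff₀ h2r]; nlinarith
  have hAB : ∀ τ : ℝ, (τ - r ^ 2) / (2 * r) ≤ (τ + r ^ 2) / (2 * r) := by
    intro τ; apply div_le_div_of_nonneg_right ?_ h2r.le; nlinarith
  have hAmono : ∀ τ₁ τ₂ : ℝ, τ₁ < τ₂ → (τ₁ - r ^ 2) / (2 * r) < (τ₂ - r ^ 2) / (2 * r) := by
    intro τ₁ τ₂ h; exact div_lt_div_of_pos_right (by linarith) h2r
  have hBmono : ∀ τ₁ τ₂ : ℝ, τ₁ ≤ τ₂ → (τ₁ + r ^ 2) / (2 * r) ≤ (τ₂ + r ^ 2) / (2 * r) := by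
    intro τ₁ τ₂ h; exact div_le_div_of_nonneg_right (by linarith) h2r.le
  refine ⟨?_, ?_, ?_, ?_⟩
  · -- continuity
    have : ContinuousOn (fun τ => ∫ u in Set.Ioo (-Υ) Υ,
        φ u / (((τ - r ^ 2) / (2 * r) - u) * ((τ + r ^ 2) / (2 * r) - u)))
        (Set.Ici τ0) := by
      apply continuousOn_of_dominated (bound := fun u => (1/r) * (φ u / (Υ - u)))
      · intro τ hτ
        exact (aux_cont φ Υ _ _ hφ (hA τ hτ) (hAB τ)).aestronglyMeasurable measurableSet_Ioo
      · intro τ hτ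
        refine (ae_restrict_iff' measurableSet_Ioo).2 (Filter.Eventually.of_forall fun u hu => ?_)
        simp only [Set.mem_Ioo] at hu
        have h1 : 0 < Υ - u := by linarith [hu.2]
        have h2 : Υ - u ≤ (τ - r ^ 2) / (2 * r) - u := by have := hA τ hτ; linarith
        have h3 : r ≤ (τ + r ^ 2) / (2 * r) - u := by have := hB τ hτ; linarith [hu.2]
        have hden : (0:ℝ) < ((τ - r ^ 2) / (2 * r) - u) * ((τ + r ^ 2) / (2 * r) - u) := by
          nlinarith
        rw [Real.norm_eq_abs, abs_of_nonneg (div_nonneg (hpos u) hden.le),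
          one_div, inv_mul_eq_div, div_div]
        exact div_le_div_of_nonneg_left (hpos u) (mul_pos h1 hr) (by nlinarith)
      · exact hint.const_mul _
      · refine (ae_restrict_iff' measurableSet_Ioo).2 (Filter.Eventually.of_forall fun u hu => ?_)
        simp only [Set.mem_Ioo] at hu
        apply ContinuousOn.div continuousOn_const (by fun_prop)
        intro τ hτ
        have h2 : Υ - u ≤ (τ - r ^ 2) / (2 * r) - u := by have := hA τ hτ; linarith
        have h3 : r ≤ (τ + r ^ 2) / (2 * r) - u := by have := hB τ hτ; linarith [hu.2]
        have h1 : 0 < Υ - u := by linarith [hu.2]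
        nlinarith
    exact (continuousOn_const.sub (continuousOn_const.mul this)).congr fun τ _ => rfl
  · -- strict monotonicity
    intro τ₁ hτ₁ τ₂ hτ₂ h12
    simp only [Set.mem_Ici] at hτ₁ hτ₂
    have key := aux_lt φ Υ ((τ₁ - r ^ 2) / (2 * r)) ((τ₁ + r ^ 2) / (2 * r))
      ((τ₂ - r ^ 2) / (2 * r)) ((τ₂ + r ^ 2) / (2 * r)) r hΥ hφ hpos hppos hint hr
      (hA τ₁ hτ₁) (hB τ₁ hτ₁) (hAB τ₁) (hAmono τ₁ τ₂ h12) (hBmono τ₁ τ₂ h12.le) (hAB τ₂)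
    simp only [Ffun]
    have hc : (0:ℝ) < 1 / (2 * r ^ 2) := by positivity
    nlinarith
  · -- boundary value
    simp only [Ffun, PhiFun]
    rw [show (τ0 - r ^ 2) / (2 * r) = Υ by rw [hτ0]; field_simp; ring,
      show (τ0 + r ^ 2) / (2 * r) = Υ + r by rw [hτ0]; field_simp; ring]
  · -- tendsto at top
    have hI0 : ∀ τ : ℝ, τ0 ≤ τ → 0 ≤ ∫ u in Set.Ioo (-Υ) Υ,
        φ u / (((τ - r ^ 2) / (2 * r) - u) * ((τ + r ^ 2) / (2 * r) - u)) := by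
      intro τ hτ
      refine setIntegral_nonneg measurableSet_Ioo fun u hu => ?_
      simp only [Set.mem_Ioo] at hu
      have h2 : Υ - u ≤ (τ - r ^ 2) / (2 * r) - u := by have := hA τ hτ; linarith
      have h3 : r ≤ (τ + r ^ 2) / (2 * r) - u := by have := hB τ hτ; linarith [hu.2]
      have h1 : 0 < Υ - u := by linarith [hu.2]
      exact div_nonneg (hpos u) (by nlinarith)
    have hIle : ∀ τ : ℝ, τ0 ≤ τ → (∫ u in Set.Ioo (-Υ) Υ,
        φ u / (((τ - r ^ 2) / (2 * r) - u) * ((τ + r ^ 2) / (2 * r) - u))) ≤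
        (1 / ((τ - r ^ 2) / (2 * r) - Υ + r)) * ∫ u in Set.Ioo (-Υ) Υ, φ u / (Υ - u) := by
      intro τ hτ
      rw [← integral_const_mul]
      refine setIntegral_mono_on
        (aux_int φ Υ _ _ r hφ hpos hint hr (hA τ hτ) (hB τ hτ) (hAB τ))
        (hint.const_mul _)
        measurableSet_Ioo fun u hu => ?_
      simp only [Set.mem_Ioo] at hu
      have h1 : 0 < Υ - u := by linarith [hu.2]
      have hAu : Υ - u ≤ (τ - r ^ 2) / (2 * r) - u := by have := hA τ hτ; linarith
      have hAΥ : Υ ≤ (τ - r ^ 2) / (2 * r) := hA τ hτ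
      have hBA : (τ + r ^ 2) / (2 * r) = (τ - r ^ 2) / (2 * r) + r := by
        field_simp; ring
      have hcpos : (0:ℝ) < (τ - r ^ 2) / (2 * r) - Υ + r := by linarith
      have hdd : (Υ - u) * ((τ - r ^ 2) / (2 * r) - Υ + r) ≤
          ((τ - r ^ 2) / (2 * r) - u) * ((τ + r ^ 2) / (2 * r) - u) := by
        rw [hBA]; nlinarith
      rw [one_div, inv_mul_eq_div, div_div]
      exact div_le_div_of_nonneg_left (hpos u) (mul_pos h1 hcpos) hdd
    have htend : Filter.Tendsto (fun τ : ℝ => (1 / ((τ - r ^ 2) / (2 * r) - Υ + r)) *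
        ∫ u in Set.Ioo (-Υ) Υ, φ u / (Υ - u)) Filter.atTop (nhds 0) := by
      rw [show (0:ℝ) = 0 * ∫ u in Set.Ioo (-Υ) Υ, φ u / (Υ - u) by ring]
      refine Filter.Tendsto.mul_const _ ?_
      simp only [one_div]
      apply Filter.Tendsto.inv_tendsto_atTop
      apply Filter.tendsto_atTop_add_const_right
      apply Filter.tendsto_atTop_add_const_right
      apply Filter.Tendsto.atTop_div_const h2r
      exact Filter.tendsto_atTop_add_const_right _ _ Filter.tendsto_id
    have hsq : Filter.Tendsto (fun τ : ℝ => ∫ u in Set.Ioo (-Υ) Υ,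
        φ u / (((τ - r ^ 2) / (2 * r) - u) * ((τ + r ^ 2) / (2 * r) - u)))
        Filter.atTop (nhds 0) := by
      refine squeeze_zero' ?_ ?_ htend
      · filter_upwards [Filter.eventually_ge_atTop τ0] with τ hτ using hI0 τ hτ
      · filter_upwards [Filter.eventually_ge_atTop τ0] with τ hτ using hIle τ hτ
    have h' : Filter.Tendsto (fun τ => 1 - (1 / (2 * r ^ 2)) * ∫ u in Set.Ioo (-Υ) Υ,
        φ u / (((τ - r ^ 2) / (2 * r) - u) * ((τ + r ^ 2) / (2 * r) - u)))
        Filter.atTop (nhds (1 - (1 / (2 * r ^ 2)) * 0)) :=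
      Filter.Tendsto.const_sub _ (Filter.Tendsto.const_mul _ hsq)
    simp only [mul_zero, sub_zero] at h'
    exact h'.congr fun τ => rfl

lemma Phi_nonpos (hΥ : 0 < Υ) (hφ : Continuous φ) (hpos : ∀ u, 0 ≤ φ u)
    (hint : IntegrableOn (fun u : ℝ => φ u / (Υ - u)) (Set.Ioo (-Υ) Υ))
    (κ₀ : ℝ) (hκ₀pos : 0 < κ₀) (hκ₀ : PhiFun φ Υ κ₀ = 0)
    (r : ℝ) (hr : 0 < r) (hrκ : r ≤ κ₀) : PhiFun φ Υ r ≤ 0 := by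
  have hJκ : (∫ u in Set.Ioo (-Υ) Υ, φ u / ((Υ - u) * (Υ + κ₀ - u))) = 2 * κ₀ ^ 2 := by
    simp only [PhiFun] at hκ₀
    have h1 : (1 / (2 * κ₀ ^ 2)) * (∫ u in Set.Ioo (-Υ) Υ,
        φ u / ((Υ - u) * (Υ + κ₀ - u))) = 1 := by linarith
    have h2 : (0:ℝ) < 2 * κ₀ ^ 2 := by positivity
    field_simp at h1
    linarith
  have hJr : (∫ u in Set.Ioo (-Υ) Υ, φ u / ((Υ - u) * (Υ + κ₀ - u))) ≤
      ∫ u in Set.Ioo (-Υ) Υ, φ u / ((Υ - u) * (Υ + r - u)) :=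
    aux_le φ Υ Υ (Υ + r) Υ (Υ + κ₀) r hφ hpos hint hr le_rfl (by linarith) (by linarith)
      le_rfl (by linarith) (by linarith)
  simp only [PhiFun]
  have hr2 : (0:ℝ) < 2 * r ^ 2 := by positivity
  have : 1 ≤ (1 / (2 * r ^ 2)) * ∫ u in Set.Ioo (-Υ) Υ, φ u / ((Υ - u) * (Υ + r - u)) := by
    rw [one_div, inv_mul_eq_div, le_div_iff₀ hr2]
    nlinarith
  linarith

lemma Ffun_rewrite (r τ : ℝ) (hr : r ≠ 0) :
    Ffun φ Υ r τ = 1 - 1/2 * ∫ u in Set.Ioo (-Υ) Υ,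
      φ u / ((τ/2 - r*u)^2 - r^4/4) := by
  simp only [Ffun]
  have key : ∀ u : ℝ, φ u / ((τ/2 - r*u)^2 - r^4/4)
      = (1/r^2) * (φ u / (((τ - r^2)/(2*r) - u) * ((τ + r^2)/(2*r) - u))) := by
    intro u
    rw [show (τ/2 - r*u)^2 - r^4/4
        = r^2 * ((((τ - r^2)/(2*r) - u) * ((τ + r^2)/(2*r) - u))) by field_simp; ring]
    rw [one_div, mul_comm (r^2) _, ← div_div, div_eq_inv_mul]
  simp_rw [key]
  rw [integral_const_mul]
  ring

lemma Ffun_small (hΥ : 0 < Υ) (hφ : Continuous φ) (hpos : ∀ u, 0 ≤ φ u)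
    (hsupp : ∀ u : ℝ, Υ ≤ |u| → φ u = 0) (τ : ℝ) (hτ : 0 < τ) :
    Filter.Tendsto (fun r => Ffun φ Υ r τ) (nhdsWithin 0 (Set.Ioi 0))
      (nhds (1 - 1/2 * ∫ u in Set.Ioo (-Υ) Υ, (4 / τ ^ 2) * φ u)) := by
  set δ := min (τ / (4 * (Υ + 1))) 1 with hδdef
  have hδ1 : δ ≤ τ / (4 * (Υ + 1)) := min_le_left _ _
  have hδ2 : δ ≤ 1 := min_le_right _ _
  have hδpos : 0 < δ := lt_min (by positivity) one_pos
  have hmem : Set.Ioo (0:ℝ) δ ∈ nhdsWithin 0 (Set.Ioi 0) :=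
    Ioo_mem_nhdsGT_of_mem ⟨le_refl 0, hδpos⟩
  have hden : ∀ r ∈ Set.Ioo (0:ℝ) δ, ∀ u : ℝ, u ∈ Set.Ioo (-Υ) Υ →
      τ^2/32 ≤ (τ/2 - r*u)^2 - r^4/4 := by
    intro r hrr u hu
    simp only [Set.mem_Ioo] at hrr hu
    have hr0 : 0 < r := hrr.1
    have hr1 : r ≤ 1 := le_trans hrr.2.le hδ2
    have hrτ : r * (4 * (Υ + 1)) < τ := by
      have := lt_of_lt_of_le hrr.2 hδ1
      rw [lt_div_iff₀ (by positivity)] at this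
      exact this
    have hrΥ : r * Υ < τ/4 := by nlinarith
    have hru1 : r * u < τ/4 := by nlinarith [hu.2]
    have hru2 : -(τ/4) < r * u := by nlinarith [hu.1]
    have hx : τ/4 ≤ τ/2 - r*u := by linarith
    have hrq : r < τ/4 := by nlinarith
    have hrsq : r^2 ≤ 1 := by nlinarith
    have hr2' : r^2 < τ^2/16 := by nlinarith
    have hr4' : r^4 ≤ r^2 := by nlinarith [sq_nonneg r]
    have hr4 : r^4/4 ≤ τ^2/64 := by nlinarith
    nlinarith [sq_nonneg (τ/2 - r*u - τ/4)]
  have key := tendsto_integral_filter_of_dominated_convergence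
    (μ := (volume : Measure ℝ).restrict (Set.Ioo (-Υ) Υ))
    (l := nhdsWithin (0:ℝ) (Set.Ioi 0))
    (F := fun r u => φ u / ((τ/2 - r*u)^2 - r^4/4))
    (f := fun u => (4/τ^2) * φ u)
    (bound := fun u => (32/τ^2) * φ u)
    ?_ ?_ ?_ ?_
  · have h1 : Filter.Tendsto (fun r => 1 - 1/2 * ∫ u in Set.Ioo (-Υ) Υ,
        φ u / ((τ/2 - r*u)^2 - r^4/4)) (nhdsWithin 0 (Set.Ioi 0))
        (nhds (1 - 1/2 * ∫ u in Set.Ioo (-Υ) Υ, (4 / τ ^ 2) * φ u)) :=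
      Filter.Tendsto.const_sub _ (Filter.Tendsto.const_mul _ key)
    refine h1.congr' ?_
    filter_upwards [self_mem_nhdsWithin] with r hr
    exact (Ffun_rewrite φ Υ r τ (ne_of_gt hr)).symm
  · filter_upwards [hmem] with r hr
    refine ContinuousOn.aestronglyMeasurable ?_ measurableSet_Ioo
    refine ContinuousOn.div hφ.continuousOn (by fun_prop) fun u hu => ?_
    have := hden r hr u hu
    have h32 : (0:ℝ) < τ^2/32 := by positivity
    exact ne_of_gt (lt_of_lt_of_le h32 this)
  · filter_upwards [hmem] with r hr
    refine (ae_restrict_iff' measurableSet_Ioo).2 (Filter.Eventually.of_forall fun u hu => ?_)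
    have hd := hden r hr u hu
    have h32 : (0:ℝ) < τ^2/32 := by positivity
    have hdpos : (0:ℝ) < (τ/2 - r*u)^2 - r^4/4 := lt_of_lt_of_le h32 hd
    rw [Real.norm_eq_abs, abs_of_nonneg (div_nonneg (hpos u) hdpos.le),
      show (32/τ^2) * φ u = φ u / (τ^2/32) by field_simp]
    exact div_le_div_of_nonneg_left (hpos u) h32 hd
  · exact ((aux_integrable_phi φ Υ hΥ hφ hsupp).integrableOn).const_mul _
  · refine Filter.Eventually.of_forall fun u => ?_
    have hDcont : Filter.Tendsto (fun r : ℝ => (τ/2 - r*u)^2 - r^4/4) (nhds 0)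
        (nhds ((τ/2 - 0*u)^2 - 0^4/4)) := by
      apply Continuous.tendsto
      fun_prop
    have hval : ((τ:ℝ)/2 - 0*u)^2 - 0^4/4 = τ^2/4 := by norm_num; ring
    rw [hval] at hDcont
    have hne : (τ:ℝ)^2/4 ≠ 0 := by positivity
    have := (tendsto_const_nhds (x := φ u)).div hDcont hne
    rw [show φ u / (τ^2/4) = (4/τ^2) * φ u by field_simp] at this
    exact this.mono_left nhdsWithin_le_nhds

lemma my_integral_id (hΥ : 0 < Υ) (r τ : ℝ) (hr : r ≠ 0) (hF : Ffun φ Υ r τ = 0) :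
    (∫ u in Set.Ioo (-Υ) Υ, φ u / ((τ/2 - r*u)^2 - r^4/4)) = 2 := by
  have h2 : (0:ℝ) < 2*r^2 := by positivity
  have hIg : (∫ u in Set.Ioo (-Υ) Υ,
      φ u / (((τ - r^2)/(2*r) - u) * ((τ + r^2)/(2*r) - u))) = 2*r^2 := by
    simp only [Ffun] at hF
    have h1 : (1/(2*r^2)) * (∫ u in Set.Ioo (-Υ) Υ,
        φ u / (((τ - r^2)/(2*r) - u) * ((τ + r^2)/(2*r) - u))) = 1 := by linarith
    have h3 : (2*r^2) * ((1/(2*r^2)) * (∫ u in Set.Ioo (-Υ) Υ,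
        φ u / (((τ - r^2)/(2*r) - u) * ((τ + r^2)/(2*r) - u)))) = (2*r^2) * 1 := by rw [h1]
    rw [← mul_assoc, mul_one_div, div_self (ne_of_gt h2), one_mul, mul_one] at h3
    linarith
  have key : ∀ u : ℝ, φ u / ((τ/2 - r*u)^2 - r^4/4)
      = (1/r^2) * (φ u / (((τ - r^2)/(2*r) - u) * ((τ + r^2)/(2*r) - u))) := by
    intro u
    rw [show (τ/2 - r*u)^2 - r^4/4
        = r^2 * ((((τ - r^2)/(2*r) - u) * ((τ + r^2)/(2*r) - u))) by field_simp; ring]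
    rw [one_div, mul_comm (r^2) _, ← div_div, div_eq_inv_mul]
  simp_rw [key]
  rw [integral_const_mul, hIg]
  field_simp

end main
end myaux

theorem stmt12 (Υ : ℝ) (hΥ : 0 < Υ) (φ : ℝ → ℝ)
    (hpos : ∀ u : ℝ, 0 ≤ φ u)
    (heven : ∀ u : ℝ, φ (-u) = φ u)
    (hcont : Continuous φ)
    (hppos : ∀ u : ℝ, |u| < Υ → 0 < φ u)
    (hsupp : ∀ u : ℝ, Υ ≤ |u| → φ u = 0)
    (hint : IntegrableOn (fun u : ℝ => φ u / (Υ - u)) (Set.Ioo (-Υ) Υ))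
    (κ₀ : ℝ) (hκ₀pos : 0 < κ₀) (hκ₀ : PhiFun φ Υ κ₀ = 0)
    (hκ₀uniq : ∀ κ : ℝ, 0 < κ → PhiFun φ Υ κ = 0 → κ = κ₀) :
    (∀ r : ℝ, 0 < r → r ≤ κ₀ →
      ContinuousOn (Ffun φ Υ r) (Set.Ici (2 * r * Υ + r ^ 2)) ∧
      StrictMonoOn (Ffun φ Υ r) (Set.Ici (2 * r * Υ + r ^ 2)) ∧
      Ffun φ Υ r (2 * r * Υ + r ^ 2) = PhiFun φ Υ r ∧
      PhiFun φ Υ r ≤ 0 ∧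
      Filter.Tendsto (Ffun φ Υ r) Filter.atTop (nhds 1) ∧
      (∃! τ : ℝ, τ ∈ Set.Ici (2 * r * Υ + r ^ 2) ∧ Ffun φ Υ r τ = 0)) ∧
    ∃ τstar : ℝ → ℝ,
      (∀ r : ℝ, 0 < r → r ≤ κ₀ →
        2 * r * Υ + r ^ 2 ≤ τstar r ∧ Ffun φ Υ r (τstar r) = 0 ∧
        (∫ u in Set.Ioo (-Υ) Υ,
          φ u / ((τstar r / 2 - r * u) ^ 2 - r ^ 4 / 4)) = 2) ∧
      τstar κ₀ = 2 * κ₀ * Υ + κ₀ ^ 2 ∧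
      Filter.Tendsto τstar (nhdsWithin 0 (Set.Ioi 0))
        (nhds (Real.sqrt (2 * ∫ u : ℝ, φ u))) := by
  classical
  have key : ∀ r : ℝ, 0 < r → r ≤ κ₀ →
      ContinuousOn (Ffun φ Υ r) (Set.Ici (2 * r * Υ + r ^ 2)) ∧
      StrictMonoOn (Ffun φ Υ r) (Set.Ici (2 * r * Υ + r ^ 2)) ∧
      Ffun φ Υ r (2 * r * Υ + r ^ 2) = PhiFun φ Υ r ∧
      PhiFun φ Υ r ≤ 0 ∧
      Filter.Tendsto (Ffun φ Υ r) Filter.atTop (nhds 1) ∧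
      (∃! τ : ℝ, τ ∈ Set.Ici (2 * r * Υ + r ^ 2) ∧ Ffun φ Υ r τ = 0) := by
    intro r hr hrκ
    obtain ⟨hc, hm, hb, ht⟩ := main_r φ Υ hΥ hcont hpos hppos hsupp hint r hr
    have hP := Phi_nonpos φ Υ hΥ hcont hpos hint κ₀ hκ₀pos hκ₀ r hr hrκ
    refine ⟨hc, hm, hb, hP, ht, ?_⟩
    have hF0 : Ffun φ Υ r (2*r*Υ + r^2) ≤ 0 := by rw [hb]; exact hP
    obtain ⟨T, hT1, hT2⟩ : ∃ T : ℝ, 0 < Ffun φ Υ r T ∧ 2*r*Υ + r^2 ≤ T :=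
      ((ht.eventually_const_lt zero_lt_one).and
        (Filter.eventually_ge_atTop _)).exists
    have hIVT := intermediate_value_Icc hT2 (hc.mono Set.Icc_subset_Ici_self)
    have h0mem : (0:ℝ) ∈ Set.Icc (Ffun φ Υ r (2*r*Υ + r^2)) (Ffun φ Υ r T) :=
      ⟨hF0, hT1.le⟩
    obtain ⟨τs, hτs, hFτs⟩ := hIVT h0mem
    refine ⟨τs, ⟨Set.mem_Ici.2 hτs.1, hFτs⟩, fun y hy => ?_⟩
    exact hm.injOn (Set.mem_Ici.2 hy.1) (Set.mem_Ici.2 hτs.1) (by rw [hy.2, hFτs])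
  refine ⟨key, ?_⟩
  set ρ := ∫ u in Set.Ioo (-Υ) Υ, φ u with hρdef
  have hρpos : 0 < ρ := aux_rho_pos φ Υ hΥ hcont hpos hppos hsupp
  have hρeq : ρ = ∫ u : ℝ, φ u := aux_rho_eq φ Υ hΥ hsupp
  set s := Real.sqrt (2 * ∫ u : ℝ, φ u) with hsdef
  have hs2 : s^2 = 2*ρ := by
    rw [hsdef, ← hρeq, Real.sq_sqrt (by positivity)]
  have hspos : 0 < s := Real.sqrt_pos.2 (by rw [← hρeq]; positivity)
  refine ⟨fun r => if h : 0 < r ∧ r ≤ κ₀ then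
    ((key r h.1 h.2).2.2.2.2.2).exists.choose else s, ?_, ?_, ?_⟩
  · intro r hr hrκ
    simp only [dif_pos (And.intro hr hrκ)]
    obtain ⟨h1, h2⟩ := ((key r hr hrκ).2.2.2.2.2).exists.choose_spec
    exact ⟨Set.mem_Ici.1 h1, h2, my_integral_id φ Υ hΥ r _ (ne_of_gt hr) h2⟩
  · simp only [dif_pos (And.intro hκ₀pos (le_refl κ₀))]
    refine ((key κ₀ hκ₀pos le_rfl).2.2.2.2.2).unique
      ((key κ₀ hκ₀pos le_rfl).2.2.2.2.2).exists.choose_spec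
      ⟨Set.mem_Ici.2 le_rfl, ?_⟩
    rw [(key κ₀ hκ₀pos le_rfl).2.2.1]
    exact hκ₀
  · rw [Metric.tendsto_nhds]
    intro ε hε
    set ε' := min ε (s/2) with hε'def
    have hε'pos : 0 < ε' := lt_min hε (by linarith)
    have hε'ε : ε' ≤ ε := min_le_left _ _
    have hε's : ε' ≤ s/2 := min_le_right _ _
    set τm := s - ε' with hτmdef
    set τp := s + ε' with hτpdef
    have hτmpos : 0 < τm := by simp only [hτmdef]; linarith
    have hτppos : 0 < τp := by simp only [hτpdef]; linarith
    have limm := Ffun_small φ Υ hΥ hcont hpos hsupp τm hτmpos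
    have limp := Ffun_small φ Υ hΥ hcont hpos hsupp τp hτppos
    have hLm : 1 - 1/2 * ∫ u in Set.Ioo (-Υ) Υ, (4 / τm ^ 2) * φ u < 0 := by
      rw [integral_const_mul, ← hρdef]
      have hτms : τm < s := by simp only [hτmdef]; linarith
      have h1 : τm^2 < 2*ρ := by rw [← hs2]; nlinarith
      have h2 : 2 < (4/τm^2) * ρ := by
        rw [div_mul_eq_mul_div, lt_div_iff₀ (by positivity)]
        nlinarith
      linarith
    have hLp : 0 < 1 - 1/2 * ∫ u in Set.Ioo (-Υ) Υ, (4 / τp ^ 2) * φ u := by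
      rw [integral_const_mul, ← hρdef]
      have hτps : s < τp := by simp only [hτpdef]; linarith
      have h1 : 2*ρ < τp^2 := by rw [← hs2]; nlinarith
      have h2 : (4/τp^2) * ρ < 2 := by
        rw [div_mul_eq_mul_div, div_lt_iff₀ (by positivity)]
        nlinarith
      linarith
    have evm := limm.eventually_lt_const hLm
    have evp := limp.eventually_const_lt hLp
    set δ' := min κ₀ (min 1 (τm / (2*Υ + 2))) with hδ'def
    have hδ'pos : 0 < δ' := lt_min hκ₀pos (lt_min one_pos (by positivity))
    have evδ : Set.Ioo (0:ℝ) δ' ∈ nhdsWithin 0 (Set.Ioi 0) :=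
      Ioo_mem_nhdsGT_of_mem ⟨le_refl 0, hδ'pos⟩
    filter_upwards [evm, evp, evδ] with r hFm hFp hrδ
    simp only [Set.mem_Ioo] at hrδ
    have hr : 0 < r := hrδ.1
    have hrκ : r ≤ κ₀ := le_trans hrδ.2.le (min_le_left _ _)
    have hr1 : r ≤ 1 := le_trans hrδ.2.le (le_trans (min_le_right _ _) (min_le_left _ _))
    have hrτm : r < τm / (2*Υ + 2) := lt_of_lt_of_le hrδ.2
      (le_trans (min_le_right _ _) (min_le_right _ _))
    have hbd : 2*r*Υ + r^2 ≤ τm := by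
      rw [lt_div_iff₀ (by positivity : (0:ℝ) < 2*Υ + 2)] at hrτm
      nlinarith
    obtain ⟨hc, hm, hb, hP, ht, hEU⟩ := key r hr hrκ
    simp only [dif_pos (And.intro hr hrκ)]
    obtain ⟨hτ1, hτ2⟩ := hEU.exists.choose_spec
    set τst := hEU.exists.choose with hτstdef
    have hmem0 : τst ∈ Set.Ici (2*r*Υ + r^2) := hτ1
    have hmemm : τm ∈ Set.Ici (2*r*Υ + r^2) := Set.mem_Ici.2 hbd
    have hmemp : τp ∈ Set.Ici (2*r*Υ + r^2) := Set.mem_Ici.2 (by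
      simp only [hτpdef, hτmdef] at *; linarith)
    have hlt1 : τm < τst := by
      by_contra hcon
      push_neg at hcon
      have := hm.monotoneOn hmem0 hmemm hcon
      rw [hτ2] at this
      linarith
    have hlt2 : τst < τp := by
      by_contra hcon
      push_neg at hcon
      have := hm.monotoneOn hmemp hmem0 hcon
      rw [hτ2] at this
      linarith
    rw [Real.dist_eq, abs_lt]
    constructor
    · simp only [hτmdef] at hlt1; linarith
    · simp only [hτpdef] at hlt2; linarith
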